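/- Let V be a finite set, and for each v ∈ V let h_v : 𝒳 → [0,1] be monotone and DR-submodular. Let R₁, …, R_θ be subsets of V with θ ≥ 1 and let n > 0 be a real number. Then the function ĝ(x) = (n/θ)·Σ_{i=1}^{θ} (1 − ∏_{v∈R_i}(1 − h_v(x))) is nonnegative, monotone, and DR-submodular on 𝒳. -/

import Mathlib

/-- `x` lies in the lattice `𝒳`: each coordinate is a nonnegative integer multiple of `δ`. -/
def InLattice {d : ℕ} (δ : ℝ) (x : Fin d → ℝ) : Prop := ∀ i, ∃ n : ℕ, x i = n * δ

/-- The `i`-th standard unit vector of `ℝ^d`. -/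
def eVec {d : ℕ} (i : Fin d) : Fin d → ℝ := Pi.single i 1

/-- Key product-difference inequality used for DR-submodularity. -/
lemma prod_diff_le_prod_diff {V : Type*} (S : Finset V) (a a' b b' : V → ℝ)
    (h1 : ∀ v ∈ S, 0 ≤ a' v) (h2 : ∀ v ∈ S, a' v ≤ a v) (h3 : ∀ v ∈ S, a v ≤ 1)
    (h4 : ∀ v ∈ S, 0 ≤ b' v) (h5 : ∀ v ∈ S, b' v ≤ b v)
    (h7 : ∀ v ∈ S, b v ≤ a v) (h8 : ∀ v ∈ S, b' v ≤ a' v)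
    (h9 : ∀ v ∈ S, b v - b' v ≤ a v - a' v) :
    (∏ v ∈ S, b v) - (∏ v ∈ S, b' v) ≤ (∏ v ∈ S, a v) - (∏ v ∈ S, a' v) := by
  induction S using Finset.cons_induction with
  | empty => simp
  | cons v S hv ih =>
    simp only [Finset.prod_cons] at *
    set A := ∏ w ∈ S, a w with hA
    set A' := ∏ w ∈ S, a' w with hA'
    set B := ∏ w ∈ S, b w with hB
    set B' := ∏ w ∈ S, b' w with hB'
    have mem : ∀ w ∈ S, w ∈ Finset.cons v S hv := fun w hw => Finset.mem_cons_of_mem hw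
    have vm : v ∈ Finset.cons v S hv := Finset.mem_cons_self v S
    have ihS := ih (fun w hw => h1 w (mem w hw)) (fun w hw => h2 w (mem w hw))
      (fun w hw => h3 w (mem w hw)) (fun w hw => h4 w (mem w hw))
      (fun w hw => h5 w (mem w hw)) (fun w hw => h7 w (mem w hw))
      (fun w hw => h8 w (mem w hw)) (fun w hw => h9 w (mem w hw))
    have hA'0 : 0 ≤ A' := Finset.prod_nonneg (fun w hw => h1 w (mem w hw))
    have hB'0 : 0 ≤ B' := Finset.prod_nonneg (fun w hw => h4 w (mem w hw))
    have hB'B : B' ≤ B := Finset.prod_le_prod (fun w hw => h4 w (mem w hw))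
      (fun w hw => h5 w (mem w hw))
    have hB'A' : B' ≤ A' := Finset.prod_le_prod (fun w hw => h4 w (mem w hw))
      (fun w hw => h8 w (mem w hw))
    have hb0 : 0 ≤ b v := le_trans (h4 v vm) (h5 v vm)
    have ha0 : 0 ≤ a v := le_trans hb0 (h7 v vm)
    have t1 : b v * (B - B') ≤ a v * (A - A') := by
      apply mul_le_mul (h7 v vm) ihS (by linarith) ha0
    have t2 : B' * (b v - b' v) ≤ A' * (a v - a' v) := by
      apply mul_le_mul hB'A' (h9 v vm) (by have := h5 v vm; linarith) hA'0
    nlinarith [t1, t2]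

/-- Let `V` be a finite set and for each `v ∈ V` let `h v : 𝒳 → [0,1]` be monotone and
DR-submodular. Let `R₁, …, R_θ ⊆ V` with `θ ≥ 1` and `n > 0`. Then
`ĝ(x) = (n/θ)·Σᵢ (1 − ∏_{v∈Rᵢ}(1 − h v x))` is nonnegative, monotone, and DR-submodular. -/
theorem gHat_nonneg_monotone_DRsubmodular {d : ℕ} (hd : 1 ≤ d) (δ : ℝ) (hδ : 0 < δ)
    {V : Type*} [Fintype V] (h : V → (Fin d → ℝ) → ℝ)
    (hrange : ∀ v, ∀ x, InLattice δ x → h v x ∈ Set.Icc (0 : ℝ) 1)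
    (hmono : ∀ v, ∀ x y, InLattice δ x → InLattice δ y → x ≤ y → h v x ≤ h v y)
    (hsub : ∀ v, ∀ x y, InLattice δ x → InLattice δ y → x ≤ y → ∀ i : Fin d,
      h v (y + δ • eVec i) - h v y ≤ h v (x + δ • eVec i) - h v x)
    (θ : ℕ) (hθ : 1 ≤ θ) (R : Fin θ → Finset V) (n : ℝ) (hn : 0 < n)
    (gHat : (Fin d → ℝ) → ℝ)
    (hgHat : ∀ x, gHat x = (n / θ) * ∑ i : Fin θ, (1 - ∏ v ∈ R i, (1 - h v x))) :
    (∀ x, InLattice δ x → 0 ≤ gHat x) ∧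
    (∀ x y, InLattice δ x → InLattice δ y → x ≤ y → gHat x ≤ gHat y) ∧
    (∀ x y, InLattice δ x → InLattice δ y → x ≤ y → ∀ i : Fin d,
      gHat (y + δ • eVec i) - gHat y ≤ gHat (x + δ • eVec i) - gHat x) := by
  have hcoef : 0 ≤ n / θ := by
    apply div_nonneg hn.le
    exact_mod_cast Nat.zero_le θ
  -- moving by δ • eVec i stays in the lattice
  have hlatstep : ∀ (x : Fin d → ℝ), InLattice δ x → ∀ i : Fin d,
      InLattice δ (x + δ • eVec i) := by
    intro x hx i j
    obtain ⟨m, hm⟩ := hx j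
    by_cases hj : j = i
    · refine ⟨m + 1, ?_⟩
      subst hj
      simp [eVec, Pi.single_eq_same, hm]
      push_cast; ring
    · refine ⟨m, ?_⟩
      simp [eVec, Pi.single_eq_of_ne hj, hm]
  -- x ≤ x + δ • eVec i
  have hle_step : ∀ (x : Fin d → ℝ) (i : Fin d), x ≤ x + δ • eVec i := by
    intro x i j
    have h0 : (0:ℝ) ≤ eVec i j := by
      by_cases hj : j = i
      · subst hj; simp [eVec]
      · simp [eVec, Pi.single_eq_of_ne hj]
    have h1 : 0 ≤ δ * eVec i j := mul_nonneg hδ.le h0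
    simp only [Pi.add_apply, Pi.smul_apply, smul_eq_mul]
    linarith
  refine ⟨?_, ?_, ?_⟩
  · -- nonnegativity
    intro x hx
    rw [hgHat]
    apply mul_nonneg hcoef
    apply Finset.sum_nonneg
    intro i _
    have : (∏ v ∈ R i, (1 - h v x)) ≤ 1 := by
      apply Finset.prod_le_one
      · intro v _; have := hrange v x hx; simp [Set.mem_Icc] at this; linarith [this.2]
      · intro v _; have := hrange v x hx; simp [Set.mem_Icc] at this; linarith [this.1]
    linarith
  · -- monotonicity
    intro x y hx hy hxy
    rw [hgHat, hgHat]
    apply mul_le_mul_of_nonneg_left _ hcoef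
    apply Finset.sum_le_sum
    intro i _
    have : (∏ v ∈ R i, (1 - h v y)) ≤ ∏ v ∈ R i, (1 - h v x) := by
      apply Finset.prod_le_prod
      · intro v _; have := hrange v y hy; simp [Set.mem_Icc] at this; linarith [this.2]
      · intro v _; have := hmono v x y hx hy hxy; linarith
    linarith
  · -- DR-submodularity
    intro x y hx hy hxy i
    have hx' := hlatstep x hx i
    have hy' := hlatstep y hy i
    have hxy' : x + δ • eVec i ≤ y + δ • eVec i := by
      intro j
      have := hxy j
      simp only [Pi.add_apply]
      linarith
    simp only [hgHat, ← mul_sub, ← Finset.sum_sub_distrib]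
    apply mul_le_mul_of_nonneg_left _ hcoef
    apply Finset.sum_le_sum
    intro k _
    have key := prod_diff_le_prod_diff (R k)
      (fun v => 1 - h v x) (fun v => 1 - h v (x + δ • eVec i))
      (fun v => 1 - h v y) (fun v => 1 - h v (y + δ • eVec i))
      (fun v _ => by have := hrange v _ hx'; simp [Set.mem_Icc] at this; linarith [this.2])
      (fun v _ => by have := hmono v x _ hx hx' (hle_step x i); linarith)
      (fun v _ => by have := hrange v x hx; simp [Set.mem_Icc] at this; linarith [this.1])
      (fun v _ => by have := hrange v _ hy'; simp [Set.mem_Icc] at this; linarith [this.2])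
      (fun v _ => by have := hmono v y _ hy hy' (hle_step y i); linarith)
      (fun v _ => by have := hmono v x y hx hy hxy; linarith)
      (fun v _ => by have := hmono v _ _ hx' hy' hxy'; linarith)
      (fun v _ => by have := hsub v x y hx hy hxy i; linarith)
    linarith [key]
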